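/- Let V be a real Banach space, let v ∈ V with ‖v‖ ≤ 1, and let δ : V × V → V be a linear map satisfying δ(v,v) = v and ‖δ(x,y)‖ ≤ (‖x‖ + ‖y‖)/2 for all x, y ∈ V. Then there exists a unique continuous linear map T : L¹([0,1];ℝ) → V such that T(𝟙) = v and T(γ(f,g)) = δ(T(f), T(g)) for all f, g ∈ L¹([0,1];ℝ). -/

import Mathlib

open MeasureTheory

/-- Lebesgue measure restricted to `[0,1]`. -/
noncomputable def μ01 : Measure ℝ := volume.restrict (Set.Icc 0 1)

/-- The space `L¹([0,1]; ℝ)`. -/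
abbrev L1 : Type := Lp ℝ 1 μ01

/-- `γ : L1 → L1 → L1` is the juxtaposition operation: `γ f g` agrees a.e. with
`x ↦ f (2x)` on `[0, 1/2)` and with `x ↦ g (2x − 1)` on `[1/2, 1]`. -/
def IsJux (γ : L1 → L1 → L1) : Prop :=
  ∀ f g : L1,
    (∀ᵐ x ∂μ01, x ∈ Set.Ico (0 : ℝ) (1 / 2) → γ f g x = f (2 * x)) ∧
    (∀ᵐ x ∂μ01, x ∈ Set.Icc (1 / 2 : ℝ) 1 → γ f g x = g (2 * x - 1))

/-- `one : L1` is the class of the constant function `1`. -/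
def IsOne (one : L1) : Prop := (one : ℝ → ℝ) =ᵐ[μ01] fun _ => (1 : ℝ)

open Set Filter Topology

namespace Stmt6

instance : IsFiniteMeasure μ01 := by
  constructor
  simp [μ01, Real.volume_Icc]

noncomputable def I (n k : ℕ) : Set ℝ := Set.Ico ((k:ℝ)/2^n) (((k:ℝ)+1)/2^n)

lemma mem_I_iff {n k : ℕ} {x : ℝ} : x ∈ I n k ↔ (k:ℝ) ≤ x * 2^n ∧ x * 2^n < (k:ℝ)+1 := by
  rw [I, Set.mem_Ico, div_le_iff₀ (by positivity), lt_div_iff₀ (by positivity)]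

lemma measurable_I (n k : ℕ) : MeasurableSet (I n k) := measurableSet_Ico

lemma I_subset {n k : ℕ} (h : k < 2^n) : I n k ⊆ Set.Ico 0 1 := by
  intro x hx
  rw [mem_I_iff] at hx
  have h2 : (0:ℝ) < 2^n := by positivity
  have hk : (k:ℝ) + 1 ≤ 2^n := by
    have : (k:ℝ) + 1 ≤ (2^n : ℕ) := by exact_mod_cast Nat.succ_le_of_lt h
    simpa using this
  constructor
  · nlinarith [hx.1, hx.2]
  · nlinarith [hx.1, hx.2]

lemma μ01_I {n k : ℕ} (h : k < 2^n) : μ01 (I n k) = ENNReal.ofReal (((2:ℝ)^n)⁻¹) := by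
  rw [μ01, Measure.restrict_apply (measurable_I n k)]
  rw [Set.inter_eq_self_of_subset_left ((I_subset h).trans Set.Ico_subset_Icc_self)]
  rw [I, Real.volume_Ico]
  congr 1
  field_simp
  ring

noncomputable def e (n k : ℕ) : L1 :=
  indicatorConstLp 1 (measurable_I n k) (measure_ne_top μ01 _) (1:ℝ)

lemma e_coe (n k : ℕ) : ⇑(e n k) =ᵐ[μ01] (I n k).indicator (fun _ => (1:ℝ)) :=
  indicatorConstLp_coeFn

lemma μ01_null_of_inter (s : Set ℝ) (h : volume (s ∩ Set.Icc 0 1) = 0) : μ01 s = 0 := by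
  rw [μ01, Measure.restrict_apply' measurableSet_Icc]; exact h

lemma e_zero {n k : ℕ} (h : 2^n ≤ k) : e n k = 0 := by
  refine Lp.ext ?_
  refine (e_coe n k).trans ?_
  have hnull : μ01 (I n k) = 0 := by
    apply μ01_null_of_inter
    refine measure_mono_null ?_ (Real.volume_singleton (a := (1:ℝ)))
    rintro x ⟨hx1, hx2, hx3⟩
    rw [mem_I_iff] at hx1
    have h2 : (0:ℝ) < 2^n := by positivity
    have hk : (2^n : ℝ) ≤ k := by exact_mod_cast h
    have : x = 1 := by nlinarith [hx1.1]
    simp [this]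
  have : ∀ᵐ x ∂μ01, x ∉ I n k := by
    rw [ae_iff]; simpa using hnull
  filter_upwards [this, Lp.coeFn_zero (E := ℝ) (p := 1) (μ := μ01)] with x hx h0
  rw [Set.indicator_of_notMem hx]
  have h0' : (⇑(0 : L1)) x = 0 := by simpa using h0
  exact h0'.symm


section W
variable {V : Type*} [NormedAddCommGroup V] [NormedSpace ℝ V]

noncomputable def w (v : V) (δ : V × V →ₗ[ℝ] V) : ℕ → ℕ → V
  | 0, _ => v
  | (n+1), k => if k < 2^n then δ (w v δ n k, 0) else δ (0, w v δ n (k - 2^n))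

variable (v : V) (δ : V × V →ₗ[ℝ] V)

lemma w_zero : w v δ 0 0 = v := rfl

lemma w_succ_lt {n k : ℕ} (h : k < 2^n) : w v δ (n+1) k = δ (w v δ n k, 0) := by
  rw [w, if_pos h]

lemma w_succ_ge {n k : ℕ} (h : ¬ k < 2^n) : w v δ (n+1) k = δ (0, w v δ n (k - 2^n)) := by
  rw [w, if_neg h]

lemma w_norm (hδnorm : ∀ x y : V, ‖δ (x, y)‖ ≤ (‖x‖ + ‖y‖) / 2) (hv : ‖v‖ ≤ 1) :
    ∀ n k, ‖w v δ n k‖ ≤ ((2:ℝ)^n)⁻¹ := by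
  intro n
  induction n with
  | zero => intro k; show ‖v‖ ≤ ((2:ℝ)^0)⁻¹; simpa using hv
  | succ n ih =>
    intro k
    have h2 : (0:ℝ) < 2^n := by positivity
    rw [w]
    split
    · refine (hδnorm _ _).trans ?_
      have := ih k
      rw [pow_succ, norm_zero]
      rw [div_le_iff₀ (by norm_num : (0:ℝ) < 2)]
      calc ‖w v δ n k‖ + 0 ≤ ((2:ℝ)^n)⁻¹ := by simpa using this
        _ = ((2:ℝ)^n * 2)⁻¹ * 2 := by field_simp
    · refine (hδnorm _ _).trans ?_
      have := ih (k - 2^n)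
      rw [pow_succ, norm_zero]
      rw [div_le_iff₀ (by norm_num : (0:ℝ) < 2)]
      calc 0 + ‖w v δ n (k - 2^n)‖ ≤ ((2:ℝ)^n)⁻¹ := by simpa using this
        _ = ((2:ℝ)^n * 2)⁻¹ * 2 := by field_simp

lemma w_split (hδv : δ (v, v) = v) :
    ∀ n k, k < 2^n → w v δ n k = w v δ (n+1) (2*k) + w v δ (n+1) (2*k+1) := by
  intro n
  induction n with
  | zero =>
    intro k hk
    have hk0 : k = 0 := by simpa using hk
    subst hk0
    rw [w_succ_lt v δ (by norm_num), w_succ_ge v δ (by norm_num)]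
    norm_num [w_zero]
    rw [← map_add,
      show ((v, (0:V)) + ((0:V), v) : V × V) = (v, v) by simp [Prod.ext_iff]]
    exact hδv.symm
  | succ n ih =>
    intro k hk
    by_cases h : k < 2^n
    · have h1 : 2*k < 2^(n+1) := by omega
      have h2 : 2*k+1 < 2^(n+1) := by omega
      rw [w_succ_lt v δ h, w_succ_lt v δ h1, w_succ_lt v δ h2, ← map_add]
      congr 1
      rw [Prod.ext_iff]
      exact ⟨ih k h, by simp⟩
    · have h1 : ¬ (2*k < 2^(n+1)) := by push_neg at h ⊢; omega
      have h2 : ¬ (2*k+1 < 2^(n+1)) := by push_neg at h ⊢; omega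
      have hk' : k - 2^n < 2^n := by omega
      rw [w_succ_ge v δ h, w_succ_ge v δ h1, w_succ_ge v δ h2, ← map_add]
      congr 1
      rw [Prod.ext_iff]
      refine ⟨by simp, ?_⟩
      show w v δ n (k - 2^n) = _
      rw [ih (k - 2^n) hk']
      congr 2 <;> omega

lemma sum_w (hδv : δ (v, v) = v) : ∀ d n k, k < 2^n →
    ∑ i ∈ Finset.range (2^d), w v δ (n+d) (2^d * k + i) = w v δ n k := by
  intro d
  induction d with
  | zero => intro n k _; simp
  | succ d ih =>
    intro n k hk
    have key : ∀ M (a : ℕ → V), ∑ i ∈ Finset.range (2*M), a i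
        = ∑ i ∈ Finset.range M, (a (2*i) + a (2*i+1)) := by
      intro M a
      induction M with
      | zero => simp
      | succ M ihM =>
        rw [show 2*(M+1) = 2*M+1+1 by ring, Finset.sum_range_succ, Finset.sum_range_succ,
          ihM, Finset.sum_range_succ, add_assoc]
    rw [show (2:ℕ)^(d+1) = 2 * 2^d by ring, key]
    have hterm : ∀ i ∈ Finset.range (2^d),
        w v δ (n+(d+1)) (2*2^d*k + 2*i) + w v δ (n+(d+1)) (2*2^d*k + (2*i+1))
        = w v δ (n+d) (2^d * k + i) := by
      intro i hi
      simp only [Finset.mem_range] at hi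
      have hlt : 2^d*k+i < 2^(n+d) := by
        calc 2^d*k+i < 2^d*k + 2^d := by omega
          _ ≤ 2^d * 2^n := by
            rw [show 2^d*k+2^d = 2^d*(k+1) by ring]
            exact Nat.mul_le_mul_left _ hk
          _ = 2^(n+d) := by rw [← pow_add]; ring_nf
      have := w_split v δ hδv (n+d) (2^d*k+i) hlt
      rw [show n+(d+1) = (n+d)+1 by ring, show 2*2^d*k+2*i = 2*(2^d*k+i) by ring,
        show 2*2^d*k+(2*i+1) = 2*(2^d*k+i)+1 by ring, ← this]
    rw [Finset.sum_congr rfl hterm, ih n k hk]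


end W

lemma I_disjoint {n j k : ℕ} (h : j ≠ k) : Disjoint (I n j) (I n k) := by
  rw [Set.disjoint_left]
  intro x hxj hxk
  rw [mem_I_iff] at hxj hxk
  rcases Nat.lt_or_ge j k with hlt | hge
  · have h1 : (j:ℝ)+1 ≤ k := by exact_mod_cast hlt
    linarith [hxj.2, hxk.1]
  · have hlt : k < j := by omega
    have h1 : (k:ℝ)+1 ≤ j := by exact_mod_cast hlt
    linarith [hxk.2, hxj.1]

lemma μ01_I_inter {n d k j : ℕ} (hk : k < 2^n) (hj : j < 2^(n+d)) :
    μ01 (I n k ∩ I (n+d) j) =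
      if 2^d * k ≤ j ∧ j < 2^d * (k+1) then ENNReal.ofReal (((2:ℝ)^(n+d))⁻¹) else 0 := by
  have hd : (0:ℝ) < 2^d := by positivity
  split
  next hcond =>
    have hsub : I (n+d) j ⊆ I n k := by
      intro x hx
      rw [mem_I_iff] at hx ⊢
      rw [pow_add] at hx
      have c1 : ((2:ℝ)^d) * k ≤ j := by exact_mod_cast hcond.1
      have c2 : (j:ℝ)+1 ≤ 2^d * (k+1) := by exact_mod_cast hcond.2
      constructor
      · have : (k:ℝ) * 2^d ≤ (x * 2^n) * 2^d := by nlinarith [hx.1]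
        exact le_of_mul_le_mul_right this hd
      · have : (x * 2^n) * 2^d < ((k:ℝ)+1) * 2^d := by nlinarith [hx.2]
        exact lt_of_mul_lt_mul_right this hd.le
    rw [Set.inter_eq_self_of_subset_right hsub, μ01_I hj]
  next hcond =>
    have hempty : I n k ∩ I (n+d) j = ∅ := by
      rw [Set.eq_empty_iff_forall_notMem]
      rintro x ⟨hx1, hx2⟩
      rw [mem_I_iff] at hx1 hx2
      rw [pow_add] at hx2
      rcases not_and_or.1 hcond with hc | hc
      · push_neg at hc
        have hc' : j + 1 ≤ 2^d * k := hc
        have c1 : (j:ℝ)+1 ≤ 2^d * k := by exact_mod_cast hc'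
        nlinarith [hx1.1, hx2.2]
      · push_neg at hc
        have c1 : ((2:ℝ)^d) * (k+1) ≤ j := by exact_mod_cast hc
        nlinarith [hx1.2, hx2.1]
    rw [hempty]
    simp

lemma setIntegral_e {n d k j : ℕ} (hk : k < 2^n) (hj : j < 2^(n+d)) :
    ∫ x in I (n+d) j, (e n k) x ∂μ01 =
      if 2^d * k ≤ j ∧ j < 2^d * (k+1) then ((2:ℝ)^(n+d))⁻¹ else 0 := by
  rw [e, setIntegral_indicatorConstLp (measurable_I _ _) (measurable_I n k) _ _]
  rw [measureReal_def, μ01_I_inter hk hj]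
  have hpos : (0:ℝ) ≤ ((2:ℝ)^(n+d))⁻¹ := by positivity
  split
  · rw [ENNReal.toReal_ofReal hpos]; simp
  · simp

section T
variable {V : Type*} [NormedAddCommGroup V] [NormedSpace ℝ V]
variable (v : V) (δ : V × V →ₗ[ℝ] V)

noncomputable def TnF (n : ℕ) (f : L1) : V :=
  ∑ k ∈ Finset.range (2^n), ((2:ℝ)^n * ∫ x in I n k, f x ∂μ01) • w v δ n k

lemma TnF_add (n : ℕ) (f g : L1) : TnF v δ n (f+g) = TnF v δ n f + TnF v δ n g := by
  rw [TnF, TnF, TnF, ← Finset.sum_add_distrib]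
  refine Finset.sum_congr rfl fun k _ => ?_
  have h1 : ∫ x in I n k, (f+g) x ∂μ01 = (∫ x in I n k, f x ∂μ01) + ∫ x in I n k, g x ∂μ01 := by
    rw [← integral_add ((L1.integrable_coeFn f).integrableOn)
      ((L1.integrable_coeFn g).integrableOn)]
    refine integral_congr_ae (ae_restrict_of_ae ((Lp.coeFn_add f g).mono fun x hx => ?_))
    simpa using hx
  rw [h1, mul_add, add_smul]

lemma TnF_smul (n : ℕ) (c : ℝ) (f : L1) : TnF v δ n (c • f) = c • TnF v δ n f := by
  rw [TnF, TnF, Finset.smul_sum]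
  refine Finset.sum_congr rfl fun k _ => ?_
  have h1 : ∫ x in I n k, (c • f) x ∂μ01 = c * ∫ x in I n k, f x ∂μ01 := by
    rw [← smul_eq_mul, ← integral_smul]
    refine integral_congr_ae (ae_restrict_of_ae ((Lp.coeFn_smul c f).mono fun x hx => ?_))
    simpa using hx
  rw [h1, smul_smul]
  ring_nf

noncomputable def Tl (n : ℕ) : L1 →ₗ[ℝ] V where
  toFun := TnF v δ n
  map_add' := TnF_add v δ n
  map_smul' := TnF_smul v δ n

lemma Tl_norm (hδnorm : ∀ x y : V, ‖δ (x, y)‖ ≤ (‖x‖ + ‖y‖) / 2) (hv : ‖v‖ ≤ 1)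
    (n : ℕ) (f : L1) : ‖Tl v δ n f‖ ≤ ‖f‖ := by
  have h2 : (0:ℝ) < 2^n := by positivity
  show ‖∑ k ∈ Finset.range (2^n), ((2:ℝ)^n * ∫ x in I n k, f x ∂μ01) • w v δ n k‖ ≤ ‖f‖
  calc _ ≤ ∑ k ∈ Finset.range (2^n),
      ‖((2:ℝ)^n * ∫ x in I n k, f x ∂μ01) • w v δ n k‖ := norm_sum_le _ _
    _ ≤ ∑ k ∈ Finset.range (2^n), |∫ x in I n k, f x ∂μ01| := by
      refine Finset.sum_le_sum fun k _ => ?_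
      rw [norm_smul, Real.norm_eq_abs, abs_mul, abs_of_pos h2]
      calc (2:ℝ)^n * |∫ x in I n k, f x ∂μ01| * ‖w v δ n k‖
          ≤ 2^n * |∫ x in I n k, f x ∂μ01| * ((2:ℝ)^n)⁻¹ := by
            refine mul_le_mul_of_nonneg_left (w_norm v δ hδnorm hv n k) ?_
            positivity
        _ = |∫ x in I n k, f x ∂μ01| := by field_simp
    _ ≤ ∑ k ∈ Finset.range (2^n), ∫ x in I n k, ‖f x‖ ∂μ01 := by
      refine Finset.sum_le_sum fun k _ => ?_
      exact le_trans (le_of_eq (Real.norm_eq_abs _).symm) (norm_integral_le_integral_norm _)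
    _ = ∫ x in ⋃ k ∈ Finset.range (2^n), I n k, ‖f x‖ ∂μ01 := by
      refine (integral_biUnion_finset _ (fun k _ => measurable_I n k) ?_ ?_).symm
      · intro i _ j _ hij
        exact I_disjoint hij
      · exact fun k _ => (L1.integrable_coeFn f).norm.integrableOn
    _ ≤ ∫ x, ‖f x‖ ∂μ01 := by
      refine setIntegral_le_integral (L1.integrable_coeFn f).norm
        (ae_of_all _ fun x => norm_nonneg _)
    _ = ‖f‖ := (L1.norm_eq_integral_norm f).symm

lemma Tl_e (hδv : δ (v, v) = v) {n d k : ℕ} (hk : k < 2^n) :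
    Tl v δ (n+d) (e n k) = w v δ n k := by
  show TnF v δ (n+d) (e n k) = w v δ n k
  rw [TnF]
  have hterm : ∀ j ∈ Finset.range (2^(n+d)),
      ((2:ℝ)^(n+d) * ∫ x in I (n+d) j, (e n k) x ∂μ01) • w v δ (n+d) j
      = if 2^d * k ≤ j ∧ j < 2^d * (k+1) then w v δ (n+d) j else 0 := by
    intro j hj
    rw [setIntegral_e hk (Finset.mem_range.1 hj)]
    split
    · rw [mul_inv_cancel₀ (by positivity), one_smul]
    · rw [mul_zero, zero_smul]
  rw [Finset.sum_congr rfl hterm, ← Finset.sum_filter]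
  have hfe : (Finset.range (2^(n+d))).filter (fun j => 2^d * k ≤ j ∧ j < 2^d * (k+1))
      = Finset.Ico (2^d * k) (2^d * (k+1)) := by
    have hle : 2^d * (k+1) ≤ 2^(n+d) := by
      calc 2^d * (k+1) ≤ 2^d * 2^n := Nat.mul_le_mul_left _ hk
        _ = 2^(n+d) := by rw [← pow_add]; ring_nf
    have hms : 2^d*(k+1) = 2^d*k + 2^d := by ring
    ext j
    simp only [Finset.mem_filter, Finset.mem_range, Finset.mem_Ico]
    exact ⟨fun h => ⟨h.2.1, h.2.2⟩, fun h => ⟨lt_of_lt_of_le h.2 hle, h.1, h.2⟩⟩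
  rw [hfe, Finset.sum_Ico_eq_sum_range]
  have hd : 2^d * (k+1) - 2^d * k = 2^d := by rw [Nat.mul_succ, Nat.add_sub_cancel_left]
  rw [hd]
  exact sum_w v δ hδv d n k hk

end T

section Density

lemma ae01 : ∀ᵐ x ∂μ01, x ∈ Set.Icc (0:ℝ) 1 :=
  ae_restrict_mem measurableSet_Icc

lemma ae_ne_one : ∀ᵐ (x:ℝ) ∂μ01, x ≠ 1 := by
  rw [ae_iff]
  refine μ01_null_of_inter _ ?_
  refine measure_mono_null ?_ (Real.volume_singleton (a := (1:ℝ)))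
  rintro x ⟨hx1, _⟩
  simpa using hx1

lemma I_split (n k : ℕ) : I n k = I (n+1) (2*k) ∪ I (n+1) (2*k+1) := by
  ext x
  simp only [Set.mem_union, mem_I_iff]
  push_cast
  rw [pow_succ]
  constructor
  · rintro ⟨h1, h2⟩
    rcases lt_or_ge (x * (2^n*2)) (2*k+1) with h | h
    · left; constructor <;> nlinarith
    · right; constructor <;> nlinarith
  · rintro (⟨h1,h2⟩|⟨h1,h2⟩) <;> constructor <;> nlinarith

lemma I_child_left (n k : ℕ) : I (n+1) (2*k) ⊆ I n k := by
  rw [I_split n k]; exact Set.subset_union_left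

lemma I_child_right (n k : ℕ) : I (n+1) (2*k+1) ⊆ I n k := by
  rw [I_split n k]; exact Set.subset_union_right

lemma exists_dyadic_in {U : Set ℝ} (hU : IsOpen U) {x : ℝ} (hx : x ∈ U) (hx0 : 0 ≤ x)
    (hx1 : x < 1) : ∃ n k, k < 2^n ∧ x ∈ I n k ∧ I n k ⊆ U := by
  obtain ⟨r, hr, hball⟩ := Metric.isOpen_iff.1 hU x hx
  obtain ⟨n, hn⟩ : ∃ n : ℕ, ((2:ℝ)^n)⁻¹ < r := by
    obtain ⟨n, hn⟩ := exists_pow_lt_of_lt_one hr (by norm_num : (1:ℝ)/2 < 1)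
    refine ⟨n, ?_⟩
    calc ((2:ℝ)^n)⁻¹ = (1/2)^n := by rw [div_pow, one_pow, one_div]
      _ < r := hn
  have h2 : (0:ℝ) < 2^n := by positivity
  have hxn : 0 ≤ x * 2^n := by positivity
  have hr2 : 1 < r * 2^n := by
    have := mul_lt_mul_of_pos_right hn h2
    rwa [inv_mul_cancel₀ (ne_of_gt h2)] at this
  refine ⟨n, ⌊x * 2^n⌋₊, ?_, ?_, ?_⟩
  · rw [Nat.floor_lt hxn]
    calc x * 2^n < 1 * 2^n := by nlinarith
      _ = ((2^n : ℕ) : ℝ) := by push_cast; ring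
  · rw [mem_I_iff]
    exact ⟨Nat.floor_le hxn, Nat.lt_floor_add_one _⟩
  · intro y hy
    rw [mem_I_iff] at hy
    have hfx1 : (⌊x * 2^n⌋₊:ℝ) ≤ x * 2^n := Nat.floor_le hxn
    have hfx2 : x * 2^n < ⌊x * 2^n⌋₊ + 1 := Nat.lt_floor_add_one _
    apply hball
    rw [Metric.mem_ball, Real.dist_eq, abs_sub_lt_iff]
    constructor <;> nlinarith [hy.1, hy.2]

noncomputable def S : Submodule ℝ L1 :=
  Submodule.span ℝ (Set.range (fun p : ℕ × ℕ => e p.1 p.2))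

lemma e_mem_S (n k : ℕ) : e n k ∈ S := Submodule.subset_span ⟨(n,k), rfl⟩

lemma indicator_diff {A B : Set ℝ} (hA : MeasurableSet A) (hB : MeasurableSet B) :
    ‖(indicatorConstLp 1 hA (measure_ne_top μ01 _) (1:ℝ))
      - indicatorConstLp 1 hB (measure_ne_top μ01 _) (1:ℝ)‖
    ≤ (μ01 (A\B)).toReal + (μ01 (B\A)).toReal := by
  have heq : indicatorConstLp 1 hA (measure_ne_top μ01 _) (1:ℝ)
        - indicatorConstLp 1 hB (measure_ne_top μ01 _) (1:ℝ)
      = indicatorConstLp 1 (hA.diff hB) (measure_ne_top μ01 _) (1:ℝ)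
        - indicatorConstLp 1 (hB.diff hA) (measure_ne_top μ01 _) (1:ℝ) := by
    refine Lp.ext ?_
    filter_upwards [Lp.coeFn_sub (indicatorConstLp 1 hA (measure_ne_top μ01 _) (1:ℝ))
        (indicatorConstLp 1 hB (measure_ne_top μ01 _) (1:ℝ)),
      Lp.coeFn_sub (indicatorConstLp 1 (hA.diff hB) (measure_ne_top μ01 _) (1:ℝ))
        (indicatorConstLp 1 (hB.diff hA) (measure_ne_top μ01 _) (1:ℝ)),
      indicatorConstLp_coeFn (hs := hA) (hμs := measure_ne_top μ01 _) (c := (1:ℝ)),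
      indicatorConstLp_coeFn (hs := hB) (hμs := measure_ne_top μ01 _) (c := (1:ℝ)),
      indicatorConstLp_coeFn (hs := hA.diff hB) (hμs := measure_ne_top μ01 _) (c := (1:ℝ)),
      indicatorConstLp_coeFn (hs := hB.diff hA) (hμs := measure_ne_top μ01 _) (c := (1:ℝ))]
      with x k1 k2 k3 k4 k5 k6
    rw [k1, k2]
    simp only [Pi.sub_apply]
    rw [k3, k4, k5, k6]
    by_cases hxA : x ∈ A <;> by_cases hxB : x ∈ B <;>
      simp [Set.indicator_apply, hxA, hxB, Set.mem_diff]
  rw [heq]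
  refine (norm_sub_le _ _).trans ?_
  rw [norm_indicatorConstLp one_ne_zero ENNReal.one_ne_top,
    norm_indicatorConstLp one_ne_zero ENNReal.one_ne_top]
  simp [measureReal_def]

lemma sum_e_coe (n : ℕ) (K : Finset ℕ) :
    ⇑(∑ k ∈ K, e n k) =ᵐ[μ01] Set.indicator (⋃ k ∈ K, I n k) (fun _ => (1:ℝ)) := by
  classical
  induction K using Finset.induction_on with
  | empty =>
    simp
    exact Lp.coeFn_zero ℝ 1 μ01
  | @insert a K' ha ih =>
    have hdisj : Disjoint (I n a) (⋃ k ∈ K', I n k) := by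
      simp only [Set.disjoint_iUnion_right]
      exact fun k hk => I_disjoint (fun h => ha (h ▸ hk))
    rw [Finset.sum_insert ha, Finset.set_biUnion_insert]
    filter_upwards [Lp.coeFn_add (e n a) (∑ k ∈ K', e n k), e_coe n a, ih] with x h1 h2 h3
    rw [h1]
    simp only [Pi.add_apply]
    rw [h2, h3, Set.indicator_union_of_disjoint hdisj]


lemma μ01_le_volume (A : Set ℝ) : μ01 A ≤ volume A :=
  Measure.restrict_le_self A

lemma approx {s : Set ℝ} (hs : MeasurableSet s) (hsub : s ⊆ Set.Ico 0 1) :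
    ∀ ε : ℝ, 0 < ε → ∃ g ∈ S,
      ‖(indicatorConstLp 1 hs (measure_ne_top μ01 _) (1:ℝ)) - g‖ < ε := by
  classical
  intro ε hε
  set εE := ENNReal.ofReal (ε/4) with hεE
  have hεE0 : 0 < εE := by
    rw [hεE, ENNReal.ofReal_pos]; linarith
  have hεEtop : εE ≠ ⊤ := ENNReal.ofReal_ne_top
  have hsfin : volume s ≠ ⊤ := by
    refine ((measure_mono hsub).trans_lt ?_).ne
    rw [Real.volume_Ico]
    simp
  obtain ⟨U, hsU, hUopen, hUlt⟩ := Set.exists_isOpen_lt_add s hsfin hεE0.ne'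
  have hUs : volume (U \ s) < εE :=
    measure_diff_lt_of_lt_add hs.nullMeasurableSet hsU hsfin hUlt
  set K : ℕ → Finset ℕ := fun n => (Finset.range (2^n)).filter (fun k => I n k ⊆ U) with hK
  set D : ℕ → Set ℝ := fun n => ⋃ k ∈ K n, I n k with hD
  have hDmeas : ∀ n, MeasurableSet (D n) :=
    fun n => (K n).measurableSet_biUnion (fun k _ => measurable_I n k)
  have hDU : ∀ n, D n ⊆ U := fun n => Set.iUnion₂_subset fun k hk => (Finset.mem_filter.1 hk).2
  have hDmono : ∀ n, D n ⊆ D (n+1) := by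
    intro n x hx
    obtain ⟨k, hk, hxk⟩ := Set.mem_iUnion₂.1 hx
    have hkr := Finset.mem_range.1 (Finset.mem_filter.1 hk).1
    have hkU := (Finset.mem_filter.1 hk).2
    rw [I_split] at hxk
    rcases hxk with h | h
    · exact Set.mem_iUnion₂.2 ⟨2*k, Finset.mem_filter.2
        ⟨Finset.mem_range.2 (by omega), (I_child_left n k).trans hkU⟩, h⟩
    · exact Set.mem_iUnion₂.2 ⟨2*k+1, Finset.mem_filter.2
        ⟨Finset.mem_range.2 (by omega), (I_child_right n k).trans hkU⟩, h⟩
  have hcover : s ⊆ ⋃ n, D n := by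
    intro x hx
    obtain ⟨n, k, hk, hxI, hIU⟩ := exists_dyadic_in hUopen (hsU hx) (hsub hx).1 (hsub hx).2
    exact Set.mem_iUnion.2 ⟨n, Set.mem_iUnion₂.2
      ⟨k, Finset.mem_filter.2 ⟨Finset.mem_range.2 hk, hIU⟩, hxI⟩⟩
  have hanti : Antitone (fun n => s \ D n) := by
    refine antitone_nat_of_succ_le fun n => ?_
    exact Set.diff_subset_diff_right (hDmono n)
  have htend := tendsto_measure_iInter_atTop (μ := volume)
    (fun n => (hs.diff (hDmeas n)).nullMeasurableSet) hanti
    ⟨0, ((measure_mono Set.diff_subset).trans_lt (lt_of_le_of_ne le_top hsfin)).ne⟩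
  have hiInter : ⋂ n, (s \ D n) = (∅ : Set ℝ) := by
    rw [Set.eq_empty_iff_forall_notMem]
    intro x hx
    have hxs := (Set.mem_iInter.1 hx 0).1
    obtain ⟨n, hn⟩ := Set.mem_iUnion.1 (hcover hxs)
    exact (Set.mem_iInter.1 hx n).2 hn
  rw [hiInter] at htend
  simp only [measure_empty] at htend
  obtain ⟨n, hn⟩ := (htend.eventually_lt_const hεE0).exists
  refine ⟨∑ k ∈ K n, e n k, Submodule.sum_mem _ (fun k _ => e_mem_S n k), ?_⟩
  have hgeq : (∑ k ∈ K n, e n k)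
      = indicatorConstLp 1 (hDmeas n) (measure_ne_top μ01 _) (1:ℝ) :=
    Lp.ext ((sum_e_coe n (K n)).trans
      (indicatorConstLp_coeFn (hs := hDmeas n) (hμs := measure_ne_top μ01 _) (c := (1:ℝ))).symm)
  rw [hgeq]
  refine lt_of_le_of_lt (indicator_diff hs (hDmeas n)) ?_
  have h1 : (μ01 (s \ D n)).toReal ≤ ε/4 := by
    have hle : μ01 (s \ D n) ≤ εE := (μ01_le_volume _).trans hn.le
    calc (μ01 (s \ D n)).toReal ≤ εE.toReal := ENNReal.toReal_mono hεEtop hle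
      _ = ε/4 := ENNReal.toReal_ofReal (by linarith)
  have h2 : (μ01 (D n \ s)).toReal ≤ ε/4 := by
    have hle : μ01 (D n \ s) ≤ εE := by
      refine (μ01_le_volume _).trans ?_
      exact ((measure_mono (Set.diff_subset_diff_left (hDU n))).trans hUs.le)
    calc (μ01 (D n \ s)).toReal ≤ εE.toReal := ENNReal.toReal_mono hεEtop hle
      _ = ε/4 := ENNReal.toReal_ofReal (by linarith)
  linarith

lemma indicator_mem_closure {s : Set ℝ} (hs : MeasurableSet s) (hμs : μ01 s ≠ ⊤) (c : ℝ) :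
    indicatorConstLp 1 hs hμs c ∈ S.topologicalClosure := by
  have h1 : indicatorConstLp 1 hs hμs c = c • indicatorConstLp 1 hs hμs (1:ℝ) := by
    refine Lp.ext ?_
    filter_upwards [indicatorConstLp_coeFn (hs := hs) (hμs := hμs) (c := c),
      Lp.coeFn_smul c (indicatorConstLp 1 hs hμs (1:ℝ)),
      indicatorConstLp_coeFn (hs := hs) (hμs := hμs) (c := (1:ℝ))] with x k1 k2 k3
    rw [k1, k2]
    simp only [Pi.smul_apply]
    rw [k3]
    by_cases hx : x ∈ s <;> simp [Set.indicator_apply, hx]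
  rw [h1]
  refine Submodule.smul_mem _ c ?_
  have hs'm : MeasurableSet (s ∩ Set.Ico 0 1) := hs.inter measurableSet_Ico
  have h2 : indicatorConstLp 1 hs hμs (1:ℝ)
      = indicatorConstLp 1 hs'm (measure_ne_top μ01 _) (1:ℝ) := by
    refine Lp.ext ?_
    filter_upwards [indicatorConstLp_coeFn (hs := hs) (hμs := hμs) (c := (1:ℝ)),
      indicatorConstLp_coeFn (hs := hs'm) (hμs := measure_ne_top μ01 _) (c := (1:ℝ)),
      ae01, ae_ne_one] with x k1 k2 k3 k4
    rw [k1, k2]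
    have hiff : x ∈ s ↔ x ∈ s ∩ Set.Ico 0 1 := by
      constructor
      · intro h; exact ⟨h, k3.1, lt_of_le_of_ne k3.2 k4⟩
      · exact fun h => h.1
    by_cases hx : x ∈ s
    · rw [Set.indicator_of_mem hx, Set.indicator_of_mem (hiff.1 hx)]
    · rw [Set.indicator_of_notMem hx, Set.indicator_of_notMem (fun h => hx (hiff.2 h))]
  rw [h2]
  rw [← SetLike.mem_coe, Submodule.topologicalClosure_coe]
  refine Metric.mem_closure_iff.2 fun ε hε => ?_
  obtain ⟨g, hg, hlt⟩ := approx hs'm Set.inter_subset_right ε hε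
  exact ⟨g, hg, by rwa [dist_eq_norm]⟩

lemma span_dense : ∀ f : L1, f ∈ S.topologicalClosure := by
  refine Lp.induction (p := 1) ENNReal.one_ne_top (fun f => f ∈ S.topologicalClosure) ?_ ?_ ?_
  · intro c t ht hμt
    rw [Lp.simpleFunc.coe_indicatorConst]
    exact indicator_mem_closure ht hμt.ne c
  · intro f g _ _ _ hPf hPg
    exact Submodule.add_mem _ hPf hPg
  · have hset : {f : L1 | f ∈ S.topologicalClosure} = closure (S : Set L1) := by
      ext f
      rw [Set.mem_setOf_eq, ← SetLike.mem_coe, Submodule.topologicalClosure_coe]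
    rw [hset]
    exact isClosed_closure

end Density

section Gamma

lemma map_affine (b : ℝ) :
    Measure.map (fun x : ℝ => 2*x + b) volume = ENNReal.ofReal 2⁻¹ • volume := by
  have h1 : (fun x : ℝ => 2*x + b) = (fun y : ℝ => y + b) ∘ (fun x : ℝ => 2*x) := rfl
  rw [h1, ← Measure.map_map (measurable_add_const b) (measurable_const_mul 2),
    Real.map_volume_mul_left (two_ne_zero), Measure.map_smul, map_add_right_eq_self]
  rw [show |(2:ℝ)⁻¹| = 2⁻¹ from abs_of_pos (by norm_num)]

lemma affine_emb (b : ℝ) : MeasurableEmbedding (fun x : ℝ => 2*x + b) := by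
  have h : (fun x : ℝ => 2*x + b)
      = ⇑((Homeomorph.mulLeft₀ (2:ℝ) two_ne_zero).trans (Homeomorph.addRight b)) := rfl
  rw [h]
  exact ((Homeomorph.mulLeft₀ (2:ℝ) two_ne_zero).trans
    (Homeomorph.addRight b)).measurableEmbedding

lemma null_affine {b : ℝ} {N : Set ℝ} (hN : volume N = 0) :
    volume ((fun x : ℝ => 2*x + b) ⁻¹' N) = 0 := by
  obtain ⟨M, hNM, hMmeas, hM0⟩ := exists_measurable_superset_of_null hN
  refine measure_mono_null (Set.preimage_mono hNM) ?_
  have : volume ((fun x : ℝ => 2*x + b) ⁻¹' M)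
      = Measure.map (fun x : ℝ => 2*x + b) volume M := by
    rw [Measure.map_apply ((measurable_const_mul 2).add_const b) hMmeas]
  rw [this, map_affine b]
  simp [hM0]

lemma left_ae {h k : ℝ → ℝ} (hhk : h =ᵐ[μ01] k) :
    ∀ᵐ x ∂μ01, x ∈ Set.Ico (0:ℝ) (1/2) → h (2*x) = k (2*x) := by
  have hN : volume ({y | h y ≠ k y} ∩ Set.Icc 0 1) = 0 := by
    have h1 := ae_iff.1 hhk
    rw [μ01, Measure.restrict_apply' measurableSet_Icc] at h1
    exact h1
  rw [ae_iff]
  refine μ01_null_of_inter _ ?_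
  refine measure_mono_null ?_ (null_affine (b := 0) hN)
  intro x hx
  simp only [Set.mem_inter_iff, Set.mem_setOf_eq, Classical.not_imp] at hx
  obtain ⟨⟨hxI, hne⟩, _⟩ := hx
  show 2*x + 0 ∈ {y | h y ≠ k y} ∩ Set.Icc 0 1
  rw [add_zero]
  exact ⟨hne, by constructor <;> [linarith [hxI.1]; linarith [hxI.2]]⟩

lemma right_ae {h k : ℝ → ℝ} (hhk : h =ᵐ[μ01] k) :
    ∀ᵐ x ∂μ01, x ∈ Set.Icc (1/2:ℝ) 1 → h (2*x - 1) = k (2*x - 1) := by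
  have hN : volume ({y | h y ≠ k y} ∩ Set.Icc 0 1) = 0 := by
    have h1 := ae_iff.1 hhk
    rw [μ01, Measure.restrict_apply' measurableSet_Icc] at h1
    exact h1
  rw [ae_iff]
  refine μ01_null_of_inter _ ?_
  refine measure_mono_null ?_ (null_affine (b := -1) hN)
  intro x hx
  simp only [Set.mem_inter_iff, Set.mem_setOf_eq, Classical.not_imp] at hx
  obtain ⟨⟨hxI, hne⟩, _⟩ := hx
  show 2*x + (-1) ∈ {y | h y ≠ k y} ∩ Set.Icc 0 1
  rw [show 2*x + (-1) = 2*x - 1 by ring]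
  exact ⟨hne, by constructor <;> [linarith [hxI.1]; linarith [hxI.2]]⟩

variable {γ : L1 → L1 → L1}

lemma jux_sub (hγ : IsJux γ) (f g f' g' : L1) : γ f g - γ f' g' = γ (f - f') (g - g') := by
  refine Lp.ext ?_
  obtain ⟨hl1, hr1⟩ := hγ f g
  obtain ⟨hl2, hr2⟩ := hγ f' g'
  obtain ⟨hl3, hr3⟩ := hγ (f - f') (g - g')
  have hfl := left_ae (Lp.coeFn_sub f f')
  have hgr := right_ae (Lp.coeFn_sub g g')
  filter_upwards [hl1, hr1, hl2, hr2, hl3, hr3, hfl, hgr,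
    Lp.coeFn_sub (γ f g) (γ f' g'), ae01] with x a1 a2 b1 b2 c1 c2 d1 d2 e1 hx
  rw [e1]
  simp only [Pi.sub_apply]
  rcases lt_or_ge x (1/2) with hlt | hge
  · have hm : x ∈ Set.Ico (0:ℝ) (1/2) := ⟨hx.1, hlt⟩
    rw [a1 hm, b1 hm, c1 hm, d1 hm]
    simp
  · have hm : x ∈ Set.Icc (1/2:ℝ) 1 := ⟨hge, hx.2⟩
    rw [a2 hm, b2 hm, c2 hm, d2 hm]
    simp

lemma jux_smul (hγ : IsJux γ) (c : ℝ) (f g : L1) : c • γ f g = γ (c • f) (c • g) := by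
  refine Lp.ext ?_
  obtain ⟨hl1, hr1⟩ := hγ f g
  obtain ⟨hl3, hr3⟩ := hγ (c • f) (c • g)
  have hfl := left_ae (Lp.coeFn_smul c f)
  have hgr := right_ae (Lp.coeFn_smul c g)
  filter_upwards [hl1, hr1, hl3, hr3, hfl, hgr,
    Lp.coeFn_smul c (γ f g), ae01] with x a1 a2 c1 c2 d1 d2 e1 hx
  rw [e1]
  simp only [Pi.smul_apply]
  rcases lt_or_ge x (1/2) with hlt | hge
  · have hm : x ∈ Set.Ico (0:ℝ) (1/2) := ⟨hx.1, hlt⟩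
    rw [a1 hm, c1 hm, d1 hm]
    simp
  · have hm : x ∈ Set.Icc (1/2:ℝ) 1 := ⟨hge, hx.2⟩
    rw [a2 hm, c2 hm, d2 hm]
    simp

lemma jux_zero (hγ : IsJux γ) : γ 0 0 = 0 := by
  have h := jux_sub hγ 0 0 0 0
  simpa using h.symm

lemma jux_split (hγ : IsJux γ) (f g : L1) : γ f g = γ f 0 + γ 0 g := by
  have h := jux_sub hγ f g f 0
  rw [sub_self, sub_zero] at h
  rw [sub_eq_iff_eq_add] at h
  rw [h, add_comm]


lemma μ01_restrict_Icc : μ01.restrict (Set.Icc 0 1) = μ01 := by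
  rw [μ01, Measure.restrict_restrict measurableSet_Icc, Set.inter_self]

lemma restrict_eq_vol {A : Set ℝ} (hA : MeasurableSet A) (hsub : A ⊆ Set.Icc 0 1) :
    μ01.restrict A = volume.restrict A := by
  rw [μ01, Measure.restrict_restrict hA, Set.inter_eq_self_of_subset_left hsub]

lemma change_var (b : ℝ) (F : ℝ → ℝ) (s : Set ℝ) :
    ∫ x in (fun x:ℝ => 2*x + b) ⁻¹' s, F (2*x + b) ∂volume = 2⁻¹ * ∫ y in s, F y ∂volume := by
  rw [← (affine_emb b).setIntegral_map F s, map_affine b, Measure.restrict_smul,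
    integral_smul_measure, ENNReal.toReal_ofReal (by norm_num), smul_eq_mul]

lemma pre_left : (fun x:ℝ => 2*x + 0) ⁻¹' (Set.Ico 0 1) = Set.Ico 0 (1/2) := by
  ext x
  simp only [Set.mem_preimage, Set.mem_Ico]
  constructor <;> rintro ⟨h1,h2⟩ <;> constructor <;> linarith

lemma pre_right : (fun x:ℝ => 2*x + (-1)) ⁻¹' (Set.Ico 0 1) = Set.Ico (1/2) 1 := by
  ext x
  simp only [Set.mem_preimage, Set.mem_Ico]
  constructor <;> rintro ⟨h1,h2⟩ <;> constructor <;> linarith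

lemma jux_norm (hγ : IsJux γ) (f g : L1) : ‖γ f g‖ ≤ (‖f‖ + ‖g‖) / 2 := by
  obtain ⟨hl, hr⟩ := hγ f g
  have hInt : Integrable (fun x => ‖(γ f g) x‖) μ01 := (L1.integrable_coeFn (γ f g)).norm
  have hsplit : Set.Icc (0:ℝ) 1 = Set.Ico 0 (1/2) ∪ Set.Icc (1/2) 1 := by
    ext x
    simp only [Set.mem_Icc, Set.mem_union, Set.mem_Ico]
    constructor
    · rintro ⟨h1,h2⟩
      rcases lt_or_ge x (1/2) with h | h
      · exact Or.inl ⟨h1, h⟩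
      · exact Or.inr ⟨h, h2⟩
    · rintro (⟨h1,h2⟩|⟨h1,h2⟩) <;> constructor <;> linarith
  have hdisj : Disjoint (Set.Ico (0:ℝ) (1/2)) (Set.Icc (1/2) 1) := by
    rw [Set.disjoint_left]
    rintro x ⟨_, h2⟩ ⟨h3, _⟩
    linarith
  have h0 : ‖γ f g‖ = ∫ x, ‖(γ f g) x‖ ∂μ01 := L1.norm_eq_integral_norm _
  rw [h0]
  rw [show (∫ x, ‖(γ f g) x‖ ∂μ01) = ∫ x in Set.Icc (0:ℝ) 1, ‖(γ f g) x‖ ∂μ01 from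
    (setIntegral_eq_integral_of_ae_compl_eq_zero
      (ae01.mono fun x hx hnot => absurd hx hnot)).symm]
  rw [show (∫ x in Set.Icc (0:ℝ) 1, ‖(γ f g) x‖ ∂μ01)
      = ∫ x in Set.Ico (0:ℝ) (1/2), ‖(γ f g) x‖ ∂μ01
        + ∫ x in Set.Icc (1/2:ℝ) 1, ‖(γ f g) x‖ ∂μ01 from by
    rw [hsplit]
    exact setIntegral_union hdisj measurableSet_Icc hInt.integrableOn hInt.integrableOn]
  have hL : ∫ x in Set.Ico (0:ℝ) (1/2), ‖(γ f g) x‖ ∂μ01 = 2⁻¹ * ‖f‖ := by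
    rw [setIntegral_congr_ae measurableSet_Ico (hl.mono fun x hx hmem => by rw [hx hmem])]
    rw [restrict_eq_vol measurableSet_Ico (fun x hx => ⟨hx.1, by linarith [hx.2]⟩)]
    rw [show Set.Ico (0:ℝ) (1/2) = (fun x:ℝ => 2*x + 0) ⁻¹' (Set.Ico 0 1) from pre_left.symm]
    have hcv := change_var 0 (fun y => ‖f y‖) (Set.Ico 0 1)
    simp only [add_zero] at hcv ⊢
    rw [hcv, setIntegral_congr_set Ico_ae_eq_Icc]
    congr 1
    exact (L1.norm_eq_integral_norm f).symm
  have hR : ∫ x in Set.Icc (1/2:ℝ) 1, ‖(γ f g) x‖ ∂μ01 = 2⁻¹ * ‖g‖ := by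
    rw [setIntegral_congr_ae measurableSet_Icc (hr.mono fun x hx hmem => by rw [hx hmem])]
    rw [restrict_eq_vol measurableSet_Icc (fun x hx => ⟨by linarith [hx.1], hx.2⟩)]
    rw [setIntegral_congr_set (Ico_ae_eq_Icc (μ := volume) (a := (1/2:ℝ)) (b := 1)).symm]
    rw [show Set.Ico (1/2:ℝ) 1 = (fun x:ℝ => 2*x + (-1)) ⁻¹' (Set.Ico 0 1) from pre_right.symm]
    have hcv := change_var (-1) (fun y => ‖g y‖) (Set.Ico 0 1)
    simp only [show ∀ x:ℝ, 2*x + (-1) = 2*x - 1 from fun x => by ring] at hcv ⊢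
    rw [hcv, setIntegral_congr_set Ico_ae_eq_Icc]
    congr 1
    exact (L1.norm_eq_integral_norm g).symm
  rw [hL, hR]
  rw [div_eq_mul_inv, mul_comm]
  ring_nf
  exact le_refl _

lemma jux_e_left (hγ : IsJux γ) {n k : ℕ} (hk : k < 2^n) : γ (e n k) 0 = e (n+1) k := by
  refine Lp.ext ?_
  obtain ⟨hl, hr⟩ := hγ (e n k) 0
  have hfl := left_ae (e_coe n k)
  have hgr := right_ae (Lp.coeFn_zero ℝ 1 μ01)
  have hk1 : (k:ℝ)+1 ≤ 2^n := by
    have : ((k+1:ℕ):ℝ) ≤ ((2^n:ℕ):ℝ) := by exact_mod_cast Nat.succ_le_of_lt hk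
    push_cast at this
    exact this
  filter_upwards [hl, hr, hfl, hgr, e_coe (n+1) k, ae01] with x a1 a2 d1 d2 ecoe hx
  rcases lt_or_ge x (1/2) with hlt | hge
  · have hm : x ∈ Set.Ico (0:ℝ) (1/2) := ⟨hx.1, hlt⟩
    rw [a1 hm, d1 hm, ecoe]
    have hiff : (2*x) ∈ I n k ↔ x ∈ I (n+1) k := by
      rw [mem_I_iff, mem_I_iff, pow_succ]
      constructor <;> rintro ⟨u1,u2⟩ <;> constructor <;> nlinarith
    by_cases hmem : x ∈ I (n+1) k
    · rw [Set.indicator_of_mem (hiff.2 hmem), Set.indicator_of_mem hmem]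
    · rw [Set.indicator_of_notMem (fun hc => hmem (hiff.1 hc)),
        Set.indicator_of_notMem hmem]
  · have hm : x ∈ Set.Icc (1/2:ℝ) 1 := ⟨hge, hx.2⟩
    rw [a2 hm, d2 hm, ecoe]
    have hnot : x ∉ I (n+1) k := by
      rw [mem_I_iff]
      rintro ⟨u1, u2⟩
      rw [pow_succ] at u2
      nlinarith [pow_pos (by norm_num : (0:ℝ) < 2) n]
    rw [Set.indicator_of_notMem hnot]
    simp

lemma jux_e_right (hγ : IsJux γ) {n k : ℕ} (hk : k < 2^n) :
    γ 0 (e n k) = e (n+1) (k + 2^n) := by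
  refine Lp.ext ?_
  obtain ⟨hl, hr⟩ := hγ 0 (e n k)
  have hfl := left_ae (Lp.coeFn_zero ℝ 1 μ01)
  have hgr := right_ae (e_coe n k)
  have hk0 : (0:ℝ) ≤ k := Nat.cast_nonneg k
  have h2n : (0:ℝ) < 2^n := by positivity
  have hcast : ((k + 2^n : ℕ):ℝ) = (k:ℝ) + 2^n := by push_cast; ring
  filter_upwards [hl, hr, hfl, hgr, e_coe (n+1) (k + 2^n), ae01] with x a1 a2 d1 d2 ecoe hx
  rcases lt_or_ge x (1/2) with hlt | hge
  · have hm : x ∈ Set.Ico (0:ℝ) (1/2) := ⟨hx.1, hlt⟩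
    rw [a1 hm, d1 hm, ecoe]
    have hnot : x ∉ I (n+1) (k + 2^n) := by
      rw [mem_I_iff, hcast]
      rintro ⟨u1, u2⟩
      rw [pow_succ] at u1
      nlinarith
    rw [Set.indicator_of_notMem hnot]
    simp
  · have hm : x ∈ Set.Icc (1/2:ℝ) 1 := ⟨hge, hx.2⟩
    rw [a2 hm, d2 hm, ecoe]
    have hiff : (2*x - 1) ∈ I n k ↔ x ∈ I (n+1) (k + 2^n) := by
      rw [mem_I_iff, mem_I_iff, pow_succ, hcast]
      constructor <;> rintro ⟨u1,u2⟩ <;> constructor <;> nlinarith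
    by_cases hmem : x ∈ I (n+1) (k + 2^n)
    · rw [Set.indicator_of_mem (hiff.2 hmem), Set.indicator_of_mem hmem]
    · rw [Set.indicator_of_notMem (fun hc => hmem (hiff.1 hc)),
        Set.indicator_of_notMem hmem]

lemma one_eq_e {one : L1} (hone : IsOne one) : one = e 0 0 := by
  refine Lp.ext ?_
  filter_upwards [hone, e_coe 0 0, ae01, ae_ne_one] with x h1 h2 h3 h4
  rw [h1, h2]
  have hmem : x ∈ I 0 0 := by
    rw [mem_I_iff]
    norm_num
    exact ⟨h3.1, lt_of_le_of_ne h3.2 h4⟩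
  rw [Set.indicator_of_mem hmem]

end Gamma

section Main
variable {V : Type*} [NormedAddCommGroup V] [NormedSpace ℝ V] [CompleteSpace V]

theorem exists_T (v : V) (δ : V × V →ₗ[ℝ] V) (hv : ‖v‖ ≤ 1) (hδv : δ (v,v) = v)
    (hδnorm : ∀ x y : V, ‖δ (x, y)‖ ≤ (‖x‖ + ‖y‖) / 2) :
    ∃ T : L1 →L[ℝ] V, (∀ n k, k < 2^n → T (e n k) = w v δ n k) ∧ ∀ f, ‖T f‖ ≤ ‖f‖ := by
  classical
  have hconst : ∀ g ∈ S, ∃ N : ℕ, ∃ x : V, ∀ m, N ≤ m → Tl v δ m g = x := by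
    intro g hg
    refine Submodule.span_induction ?_ ?_ ?_ ?_ hg
    · rintro x ⟨⟨n, k⟩, rfl⟩
      by_cases hk : k < 2^n
      · refine ⟨n, w v δ n k, fun m hm => ?_⟩
        obtain ⟨d, rfl⟩ := Nat.exists_eq_add_of_le hm
        exact Tl_e v δ hδv hk
      · refine ⟨0, 0, fun m _ => ?_⟩
        show Tl v δ m (e n k) = 0
        rw [e_zero (le_of_not_gt hk), map_zero]
    · exact ⟨0, 0, fun m _ => map_zero _⟩
    · rintro x y hx hy ⟨N1, x1, h1⟩ ⟨N2, x2, h2⟩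
      refine ⟨max N1 N2, x1 + x2, fun m hm => ?_⟩
      rw [map_add, h1 m (le_trans (le_max_left _ _) hm), h2 m (le_trans (le_max_right _ _) hm)]
    · rintro a x hx ⟨N1, x1, h1⟩
      refine ⟨N1, a • x1, fun m hm => ?_⟩
      rw [_root_.map_smul, h1 m hm]
  have hCauchy : ∀ f : L1, CauchySeq (fun n => Tl v δ n f) := by
    intro f
    rw [Metric.cauchySeq_iff]
    intro ε hε
    have hfc : f ∈ closure ((S : Set L1)) := by
      rw [← Submodule.topologicalClosure_coe]
      exact span_dense f
    obtain ⟨g, hgS, hgd⟩ := Metric.mem_closure_iff.1 hfc (ε/3) (by linarith)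
    obtain ⟨N, x, hNx⟩ := hconst g hgS
    refine ⟨N, fun m hm n hn => ?_⟩
    have key : ∀ p, N ≤ p → dist (Tl v δ p f) x < ε/3 := by
      intro p hp
      rw [← hNx p hp, dist_eq_norm, ← map_sub]
      calc ‖Tl v δ p (f - g)‖ ≤ ‖f - g‖ := Tl_norm v δ hδnorm hv p _
        _ < ε/3 := by rwa [← dist_eq_norm]
    calc dist (Tl v δ m f) (Tl v δ n f)
        ≤ dist (Tl v δ m f) x + dist x (Tl v δ n f) := dist_triangle _ _ _
      _ < ε/3 + ε/3 := by
          have := key m hm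
          have h2 := key n hn
          rw [dist_comm] at h2
          exact add_lt_add this h2
      _ < ε := by linarith
  have hconv : ∀ f : L1, ∃ x : V, Tendsto (fun n => Tl v δ n f) atTop (𝓝 x) :=
    fun f => cauchySeq_tendsto_of_complete (hCauchy f)
  choose T0 hT0 using hconv
  have hadd : ∀ f g : L1, T0 (f + g) = T0 f + T0 g := by
    intro f g
    refine tendsto_nhds_unique (hT0 (f+g)) ?_
    have h := (hT0 f).add (hT0 g)
    have heq : (fun n => Tl v δ n f + Tl v δ n g) = fun n => Tl v δ n (f + g) := by
      funext n
      rw [map_add]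
    rwa [heq] at h
  have hsmul : ∀ (c : ℝ) (f : L1), T0 (c • f) = c • T0 f := by
    intro c f
    refine tendsto_nhds_unique (hT0 (c • f)) ?_
    have h := (hT0 f).const_smul c
    have heq : (fun n => c • Tl v δ n f) = fun n => Tl v δ n (c • f) := by
      funext n
      rw [_root_.map_smul]
    rwa [heq] at h
  have hbound : ∀ f : L1, ‖T0 f‖ ≤ ‖f‖ := by
    intro f
    refine le_of_tendsto (hT0 f).norm (Eventually.of_forall fun n => ?_)
    exact Tl_norm v δ hδnorm hv n f
  refine ⟨LinearMap.mkContinuous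
    { toFun := T0, map_add' := hadd, map_smul' := hsmul } 1
    (fun f => by simpa using hbound f), ?_, ?_⟩
  · intro n k hk
    show T0 (e n k) = w v δ n k
    refine tendsto_nhds_unique (hT0 (e n k)) ?_
    refine tendsto_atTop_of_eventually_const (i₀ := n) fun m hm => ?_
    obtain ⟨d, rfl⟩ := Nat.exists_eq_add_of_le hm
    exact Tl_e v δ hδv hk
  · intro f
    exact hbound f

end Main
end Stmt6


open Stmt6

/-- for a real Banach space `V`, an element `v` with `‖v‖ ≤ 1` and a
linear map `δ : V × V → V` with `δ(v,v) = v` and `‖δ(x,y)‖ ≤ (‖x‖+‖y‖)/2`, there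
is a unique continuous linear map `T : L¹([0,1];ℝ) → V` with `T 𝟙 = v` and
`T (γ f g) = δ (T f, T g)`. -/
theorem stmt_6 {V : Type*} [NormedAddCommGroup V] [NormedSpace ℝ V] [CompleteSpace V]
    (v : V) (hv : ‖v‖ ≤ 1)
    (δ : V × V →ₗ[ℝ] V)
    (hδv : δ (v, v) = v)
    (hδnorm : ∀ x y : V, ‖δ (x, y)‖ ≤ (‖x‖ + ‖y‖) / 2)
    (γ : L1 → L1 → L1) (hγ : IsJux γ)
    (one : L1) (hone : IsOne one) :
    ∃! T : L1 →L[ℝ] V, T one = v ∧ ∀ f g : L1, T (γ f g) = δ (T f, T g) := by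
  classical
  obtain ⟨T, hTe, hTb⟩ := Stmt6.exists_T v δ hv hδv hδnorm
  have hone' : one = Stmt6.e 0 0 := Stmt6.one_eq_e hone
  have hTone : T one = v := by
    rw [hone', hTe 0 0 (by norm_num)]
    rfl
  have hsub0 : ∀ f f' : L1, γ f 0 - γ f' 0 = γ (f - f') 0 := by
    intro f f'
    have h := jux_sub hγ f 0 f' 0
    rwa [sub_zero] at h
  have hsub0' : ∀ g g' : L1, γ 0 g - γ 0 g' = γ 0 (g - g') := by
    intro g g'
    have h := jux_sub hγ 0 g 0 g'
    rwa [sub_self] at h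
  have hcont0 : Continuous (fun f : L1 => γ f 0) := by
    refine (LipschitzWith.of_dist_le_mul (K := 1) fun f f' => ?_).continuous
    rw [dist_eq_norm, dist_eq_norm, hsub0 f f']
    calc ‖γ (f - f') 0‖ ≤ (‖f - f'‖ + ‖(0:L1)‖)/2 := jux_norm hγ _ _
      _ ≤ 1 * ‖f - f'‖ := by
          rw [norm_zero, add_zero, one_mul]
          linarith [norm_nonneg (f - f')]
  have hcont0' : Continuous (fun g : L1 => γ 0 g) := by
    refine (LipschitzWith.of_dist_le_mul (K := 1) fun g g' => ?_).continuous
    rw [dist_eq_norm, dist_eq_norm, hsub0' g g']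
    calc ‖γ 0 (g - g')‖ ≤ (‖(0:L1)‖ + ‖g - g'‖)/2 := jux_norm hγ _ _
      _ ≤ 1 * ‖g - g'‖ := by
          rw [norm_zero, zero_add, one_mul]
          linarith [norm_nonneg (g - g')]
  have hb : ∀ p : V × V, ‖δ p‖ ≤ 1 * ‖p‖ := by
    intro p
    have h := hδnorm p.1 p.2
    rw [one_mul]
    have h1 : ‖p.1‖ ≤ ‖p‖ := norm_fst_le p
    have h2 : ‖p.2‖ ≤ ‖p‖ := norm_snd_le p
    calc ‖δ p‖ = ‖δ (p.1, p.2)‖ := by rw [Prod.mk.eta]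
      _ ≤ (‖p.1‖ + ‖p.2‖) / 2 := h
      _ ≤ ‖p‖ := by linarith
  set δc : V × V →L[ℝ] V := δ.mkContinuous 1 hb with hδcdef
  have hML : ∀ f : L1, T (γ f 0) = δ (T f, 0) := by
    set M : Submodule ℝ L1 :=
      { carrier := {f : L1 | T (γ f 0) = δ (T f, 0)}
        add_mem' := by
          intro f f' hf hf'
          simp only [Set.mem_setOf_eq] at hf hf' ⊢
          have haddγ : γ (f + f') 0 = γ f 0 + γ f' 0 := by
            have h := hsub0 (f + f') f'
            rw [add_sub_cancel_right] at h
            rw [← h, sub_add_cancel]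
          rw [haddγ, map_add, hf, hf', map_add,
            show ((T f + T f', (0:V)) : V × V) = (T f, 0) + (T f', 0) by
              simp [Prod.ext_iff],
            map_add]
        zero_mem' := by
          simp only [Set.mem_setOf_eq]
          rw [jux_zero hγ, map_zero]
          symm
          rw [show (((0:V), (0:V)) : V × V) = 0 from rfl, map_zero]
        smul_mem' := by
          intro c f hf
          simp only [Set.mem_setOf_eq] at hf ⊢
          have hsmγ : γ (c • f) 0 = c • γ f 0 := by
            have h := jux_smul hγ c f 0
            rw [smul_zero] at h
            exact h.symm
          rw [hsmγ, _root_.map_smul, hf, _root_.map_smul,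
            show ((c • T f, (0:V)) : V × V) = c • (T f, 0) by simp [Prod.ext_iff],
            _root_.map_smul] }
    have hMcl : IsClosed (M : Set L1) := by
      have h1 : Continuous fun f : L1 => T (γ f 0) := T.continuous.comp hcont0
      have h2 : Continuous fun f : L1 => δ (T f, 0) := by
        show Continuous fun f : L1 => δc (T f, 0)
        exact δc.continuous.comp (T.continuous.prodMk continuous_const)
      exact isClosed_eq h1 h2
    have hSM : Stmt6.S ≤ M := by
      rw [Stmt6.S, Submodule.span_le]
      rintro x ⟨⟨n, k⟩, rfl⟩
      simp only [SetLike.mem_coe]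
      by_cases hk : k < 2^n
      · show T (γ (Stmt6.e n k) 0) = δ (T (Stmt6.e n k), 0)
        rw [jux_e_left hγ hk, hTe (n+1) k (by omega), hTe n k hk, Stmt6.w_succ_lt v δ hk]
      · have hz := Stmt6.e_zero (le_of_not_gt hk)
        show Stmt6.e n k ∈ M
        rw [hz]
        exact M.zero_mem
    intro f
    exact Submodule.topologicalClosure_minimal _ hSM hMcl (Stmt6.span_dense f)
  have hMR : ∀ g : L1, T (γ 0 g) = δ (0, T g) := by
    set M : Submodule ℝ L1 :=
      { carrier := {g : L1 | T (γ 0 g) = δ (0, T g)}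
        add_mem' := by
          intro f f' hf hf'
          simp only [Set.mem_setOf_eq] at hf hf' ⊢
          have haddγ : γ 0 (f + f') = γ 0 f + γ 0 f' := by
            have h := hsub0' (f + f') f'
            rw [add_sub_cancel_right] at h
            rw [← h, sub_add_cancel]
          rw [haddγ, map_add, hf, hf', map_add,
            show (((0:V), T f + T f') : V × V) = (0, T f) + (0, T f') by
              simp [Prod.ext_iff],
            map_add]
        zero_mem' := by
          simp only [Set.mem_setOf_eq]
          rw [jux_zero hγ, map_zero]
          symm
          rw [show (((0:V), (0:V)) : V × V) = 0 from rfl, map_zero]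
        smul_mem' := by
          intro c f hf
          simp only [Set.mem_setOf_eq] at hf ⊢
          have hsmγ : γ 0 (c • f) = c • γ 0 f := by
            have h := jux_smul hγ c 0 f
            rw [smul_zero] at h
            exact h.symm
          rw [hsmγ, _root_.map_smul, hf, _root_.map_smul,
            show (((0:V), c • T f) : V × V) = c • (0, T f) by simp [Prod.ext_iff],
            _root_.map_smul] }
    have hMcl : IsClosed (M : Set L1) := by
      have h1 : Continuous fun g : L1 => T (γ 0 g) := T.continuous.comp hcont0'
      have h2 : Continuous fun g : L1 => δ (0, T g) := by
        show Continuous fun g : L1 => δc (0, T g)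
        exact δc.continuous.comp (continuous_const.prodMk T.continuous)
      exact isClosed_eq h1 h2
    have hSM : Stmt6.S ≤ M := by
      rw [Stmt6.S, Submodule.span_le]
      rintro x ⟨⟨n, k⟩, rfl⟩
      simp only [SetLike.mem_coe]
      by_cases hk : k < 2^n
      · show T (γ 0 (Stmt6.e n k)) = δ (0, T (Stmt6.e n k))
        rw [jux_e_right hγ hk, hTe (n+1) (k + 2^n) (by omega), hTe n k hk,
          Stmt6.w_succ_ge v δ (by omega)]
        simp only [Nat.add_sub_cancel]
      · have hz := Stmt6.e_zero (le_of_not_gt hk)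
        show Stmt6.e n k ∈ M
        rw [hz]
        exact M.zero_mem
    intro g
    exact Submodule.topologicalClosure_minimal _ hSM hMcl (Stmt6.span_dense g)
  have hTγ : ∀ f g : L1, T (γ f g) = δ (T f, T g) := by
    intro f g
    rw [jux_split hγ f g, map_add, hML f, hMR g, ← map_add]
    congr 1
    simp [Prod.ext_iff]
  refine ⟨T, ⟨hTone, hTγ⟩, ?_⟩
  rintro T' ⟨hT'one, hT'γ⟩
  have hT'e : ∀ n k, k < 2^n → T' (Stmt6.e n k) = Stmt6.w v δ n k := by
    intro n
    induction n with
    | zero =>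
      intro k hk
      have hk0 : k = 0 := by simpa [Nat.lt_one_iff] using hk
      subst hk0
      rw [← hone', hT'one]
      rfl
    | succ n ih =>
      intro k hk
      by_cases h : k < 2^n
      · rw [← jux_e_left hγ h, hT'γ, ih k h, map_zero, Stmt6.w_succ_lt v δ h]
      · have hk' : k - 2^n < 2^n := by omega
        have hkeq : k - 2^n + 2^n = k := by omega
        rw [← hkeq, ← jux_e_right hγ hk', hT'γ, ih _ hk', map_zero,
          Stmt6.w_succ_ge v δ (by omega)]
        simp only [Nat.add_sub_cancel]
  have hext : ∀ f, T' f = T f := by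
    set M : Submodule ℝ L1 :=
      { carrier := {f : L1 | T' f = T f}
        add_mem' := by
          intro f f' hf hf'
          simp only [Set.mem_setOf_eq] at hf hf' ⊢
          rw [map_add, map_add, hf, hf']
        zero_mem' := by
          simp only [Set.mem_setOf_eq, map_zero]
        smul_mem' := by
          intro c f hf
          simp only [Set.mem_setOf_eq] at hf ⊢
          rw [_root_.map_smul, _root_.map_smul, hf] }
    have hMcl : IsClosed (M : Set L1) := isClosed_eq T'.continuous T.continuous
    have hSM : Stmt6.S ≤ M := by
      rw [Stmt6.S, Submodule.span_le]
      rintro x ⟨⟨n, k⟩, rfl⟩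
      simp only [SetLike.mem_coe]
      by_cases hk : k < 2^n
      · show T' (Stmt6.e n k) = T (Stmt6.e n k)
        rw [hT'e n k hk, hTe n k hk]
      · show Stmt6.e n k ∈ M
        rw [Stmt6.e_zero (le_of_not_gt hk)]
        exact M.zero_mem
    intro f
    exact Submodule.topologicalClosure_minimal _ hSM hMcl (Stmt6.span_dense f)
  exact ContinuousLinearMap.ext hext
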